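/- Let σ > 0, a > 0 and v̲ < v̄ be reals. Suppose h₋, h₊ : (v̲, v̄) → ℝ are differentiable with 0 < h₋(v) < h₊(v) and f(h₋(v), v) = f(h₊(v), v) = 0 for all v ∈ (v̲, v̄), and define M(v) := ∫_{h₋(v)}^{h₊(v)} f(s,v) ds. Then M is differentiable on (v̲, v̄) with M′(v) = −(4/σ) ∫_{h₋(v)}^{h₊(v)} s/(1+s²) ds < 0; consequently, if M extends continuously to [v̲, v̄] with M(v̲) > 0 and M(v̄) < 0, then M has a unique zero v̂ in (v̲, v̄), and M′(v̂) < 0. -/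

import Mathlib

open intervalIntegral


-- antiderivative in s of f(s,v)
lemma maxwell_antider1 (σ a v x : ℝ) :
    HasDerivAt (fun s => (1/σ)*(a*s - s^2/2 - 2*v*Real.log (1+s^2)))
      ((1/σ)*(a - x - 4*x*v/(1+x^2))) x := by
  have hpos : (0:ℝ) < 1 + x^2 := by positivity
  have h1 : HasDerivAt (fun s : ℝ => 1 + s^2) (2*x) x := by
    simpa using ((hasDerivAt_id x).pow 2).const_add 1
  have hlog : HasDerivAt (fun s : ℝ => Real.log (1+s^2)) (2*x/(1+x^2)) x :=
    h1.log hpos.ne'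
  have hc : HasDerivAt (fun s : ℝ => a*s - s^2/2 - 2*v*Real.log (1+s^2))
      (a*1 - (2*x^1*1)/2 - 2*v*(2*x/(1+x^2))) x :=
    (((hasDerivAt_id x).const_mul a).sub (((hasDerivAt_id x).pow 2).div_const 2)).sub
      (hlog.const_mul (2*v))
  have := hc.const_mul (1/σ)
  refine this.congr_deriv ?_
  field_simp
  ring

lemma maxwell_antider2 (x : ℝ) :
    HasDerivAt (fun s : ℝ => (1/2)*Real.log (1+s^2)) (x/(1+x^2)) x := by
  have hpos : (0:ℝ) < 1 + x^2 := by positivity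
  have h1 : HasDerivAt (fun s : ℝ => 1 + s^2) (2*x) x := by
    simpa using ((hasDerivAt_id x).pow 2).const_add 1
  have hlog : HasDerivAt (fun s : ℝ => Real.log (1+s^2)) (2*x/(1+x^2)) x :=
    h1.log hpos.ne'
  have := hlog.const_mul (1/2 : ℝ)
  refine this.congr_deriv ?_
  field_simp

lemma maxwell_auxd (σ a : ℝ) (hσ : σ ≠ 0) (h : ℝ → ℝ) (v h' : ℝ) (hd : HasDerivAt h h' v)
    (hz : (1/σ) * (a - h v - 4 * h v * v / (1 + (h v)^2)) = 0) :
    HasDerivAt (fun t => (1/σ)*(a*(h t) - (h t)^2/2 - 2*t*Real.log (1+(h t)^2)))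
      (-(2/σ)*Real.log (1+(h v)^2)) v := by
  have hpos : (0:ℝ) < 1 + (h v)^2 := by positivity
  have h1 : HasDerivAt (fun t => 1 + (h t)^2) (2*(h v)*h') v := by
    have := (hd.pow 2).const_add 1
    refine this.congr_deriv ?_
    push_cast
    ring
  have hlog : HasDerivAt (fun t => Real.log (1+(h t)^2)) ((2*(h v)*h')/(1+(h v)^2)) v :=
    h1.log hpos.ne'
  have hmul : HasDerivAt (fun t => 2*t*Real.log (1+(h t)^2))
      (2*Real.log (1+(h v)^2) + 2*v*((2*(h v)*h')/(1+(h v)^2))) v := by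
    have := ((hasDerivAt_id v).const_mul 2).mul hlog
    refine this.congr_deriv ?_
    simp only [id]
    ring
  have hc : HasDerivAt (fun t => a*(h t) - (h t)^2/2 - 2*t*Real.log (1+(h t)^2))
      (a*h' - (2*(h v)^1*h')/2 - (2*Real.log (1+(h v)^2) + 2*v*((2*(h v)*h')/(1+(h v)^2)))) v :=
    ((hd.const_mul a).sub ((hd.pow 2).div_const 2)).sub hmul
  have := hc.const_mul (1/σ)
  refine this.congr_deriv ?_
  linear_combination h' * hz

/-- Properties of the Maxwell (equal-area) function
`M(v) = ∫_{h₋(v)}^{h₊(v)} f(s,v) ds` for `f(u,v) = (1/σ)(a - u - 4uv/(1+u²))`: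
`M` is differentiable with `M'(v) = -(4/σ)∫_{h₋(v)}^{h₊(v)} s/(1+s²) ds < 0`, and if `M`
extends continuously to `[v̲, v̄]` with `M(v̲) > 0` and `M(v̄) < 0`, then `M` has a
unique zero `v̂` in `(v̲, v̄)`, with `M'(v̂) < 0`. -/
theorem stmt_3 (σ a vlo vhi : ℝ) (hσ : 0 < σ) (ha : 0 < a) (hv : vlo < vhi)
    (hm hp : ℝ → ℝ)
    (hdm : ∀ v ∈ Set.Ioo vlo vhi, DifferentiableAt ℝ hm v)
    (hdp : ∀ v ∈ Set.Ioo vlo vhi, DifferentiableAt ℝ hp v)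
    (hord : ∀ v ∈ Set.Ioo vlo vhi, 0 < hm v ∧ hm v < hp v)
    (hzm : ∀ v ∈ Set.Ioo vlo vhi,
      (1 / σ) * (a - hm v - 4 * hm v * v / (1 + (hm v) ^ 2)) = 0)
    (hzp : ∀ v ∈ Set.Ioo vlo vhi,
      (1 / σ) * (a - hp v - 4 * hp v * v / (1 + (hp v) ^ 2)) = 0)
    (M : ℝ → ℝ)
    (hM : ∀ v, M v = ∫ s in (hm v)..(hp v), (1 / σ) * (a - s - 4 * s * v / (1 + s ^ 2))) :
    (∀ v ∈ Set.Ioo vlo vhi,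
      HasDerivAt M (-(4 / σ) * ∫ s in (hm v)..(hp v), s / (1 + s ^ 2)) v ∧
      -(4 / σ) * (∫ s in (hm v)..(hp v), s / (1 + s ^ 2)) < 0) ∧
    (∀ Mbar : ℝ → ℝ, ContinuousOn Mbar (Set.Icc vlo vhi) →
      (∀ v ∈ Set.Ioo vlo vhi, Mbar v = M v) →
      0 < Mbar vlo → Mbar vhi < 0 →
      (∃! vhat : ℝ, vhat ∈ Set.Ioo vlo vhi ∧ Mbar vhat = 0) ∧
      ∀ vhat ∈ Set.Ioo vlo vhi, Mbar vhat = 0 → deriv M vhat < 0) := by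
  -- continuity of the two integrands
  have hcont2 : Continuous (fun s : ℝ => s / (1 + s^2)) := by
    exact continuous_id.div (by continuity) (fun s => by positivity)
  -- value of the second integral
  have hIval : ∀ v : ℝ, (∫ s in (hm v)..(hp v), s / (1 + s^2))
      = (1/2)*Real.log (1+(hp v)^2) - (1/2)*Real.log (1+(hm v)^2) := by
    intro v
    exact integral_eq_sub_of_hasDerivAt (fun x _ => maxwell_antider2 x)
      (hcont2.intervalIntegrable _ _)
  have key : ∀ v ∈ Set.Ioo vlo vhi,
      HasDerivAt M (-(4 / σ) * ∫ s in (hm v)..(hp v), s / (1 + s ^ 2)) v ∧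
      -(4 / σ) * (∫ s in (hm v)..(hp v), s / (1 + s ^ 2)) < 0 := by
    intro v hvmem
    have hcont1 : ∀ w : ℝ, Continuous (fun s : ℝ => (1 / σ) * (a - s - 4 * s * w / (1 + s ^ 2))) := by
      intro w
      apply continuous_const.mul
      apply Continuous.sub (continuous_const.sub continuous_id)
      exact (by continuity : Continuous fun s : ℝ => 4 * s * w).div (by continuity)
        (fun s => by positivity)
    -- M agrees with the explicit antiderivative form on Ioo
    set G : ℝ → ℝ := fun t =>
      (1/σ)*(a*(hp t) - (hp t)^2/2 - 2*t*Real.log (1+(hp t)^2))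
      - (1/σ)*(a*(hm t) - (hm t)^2/2 - 2*t*Real.log (1+(hm t)^2)) with hG
    have hMG : M =ᶠ[nhds v] G := by
      filter_upwards [isOpen_Ioo.mem_nhds hvmem] with t _
      rw [hM t, hG]
      exact integral_eq_sub_of_hasDerivAt (fun x _ => maxwell_antider1 σ a t x)
        ((hcont1 t).intervalIntegrable _ _)
    have hGd : HasDerivAt G
        (-(2/σ)*Real.log (1+(hp v)^2) - -(2/σ)*Real.log (1+(hm v)^2)) v :=
      (maxwell_auxd σ a hσ.ne' hp v _ (hdp v hvmem).hasDerivAt (hzp v hvmem)).sub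
        (maxwell_auxd σ a hσ.ne' hm v _ (hdm v hvmem).hasDerivAt (hzm v hvmem))
    have hMd : HasDerivAt M
        (-(2/σ)*Real.log (1+(hp v)^2) - -(2/σ)*Real.log (1+(hm v)^2)) v :=
      hGd.congr_of_eventuallyEq hMG
    have hval : -(4 / σ) * (∫ s in (hm v)..(hp v), s / (1 + s ^ 2))
        = -(2/σ)*Real.log (1+(hp v)^2) - -(2/σ)*Real.log (1+(hm v)^2) := by
      rw [hIval v]; ring
    constructor
    · rw [hval]; exact hMd
    · rw [hval]
      obtain ⟨h0, h1⟩ := hord v hvmem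
      have hlt : Real.log (1+(hm v)^2) < Real.log (1+(hp v)^2) := by
        apply Real.log_lt_log (by positivity)
        nlinarith
      have : 0 < 2/σ := by positivity
      nlinarith
  refine ⟨key, ?_⟩
  intro Mbar hMbarCont hMbarEq hMlo hMhi
  -- Mbar is strictly decreasing on Icc
  have hanti : StrictAntiOn Mbar (Set.Icc vlo vhi) := by
    apply strictAntiOn_of_deriv_neg (convex_Icc vlo vhi) hMbarCont
    intro x hx
    rw [interior_Icc] at hx
    have heq : Mbar =ᶠ[nhds x] M := by
      filter_upwards [isOpen_Ioo.mem_nhds hx] with t ht using hMbarEq t ht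
    rw [heq.deriv_eq, ((key x hx).1).deriv]
    exact (key x hx).2
  -- existence
  have h0mem : (0:ℝ) ∈ Set.Icc (Mbar vhi) (Mbar vlo) := ⟨hMhi.le, hMlo.le⟩
  obtain ⟨vhat, hvhat, hveq⟩ := intermediate_value_Icc' hv.le hMbarCont h0mem
  have hvne1 : vhat ≠ vlo := fun h => by rw [h] at hveq; linarith
  have hvne2 : vhat ≠ vhi := fun h => by rw [h] at hveq; linarith
  have hvIoo : vhat ∈ Set.Ioo vlo vhi :=
    ⟨lt_of_le_of_ne hvhat.1 (Ne.symm hvne1), lt_of_le_of_ne hvhat.2 hvne2⟩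
  constructor
  · refine ⟨vhat, ⟨hvIoo, hveq⟩, ?_⟩
    rintro y ⟨hyIoo, hyeq⟩
    exact hanti.injOn (Set.Ioo_subset_Icc_self hyIoo) (Set.Ioo_subset_Icc_self hvIoo)
      (by rw [hyeq, hveq])
  · intro w hw _
    rw [((key w hw).1).deriv]
    exact (key w hw).2
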